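/- arXiv:2301.09020 — 3 statements merged into one kernel-verified Lean document; each statement's English description precedes it below -/
import Mathlib

section
/- (Left-limit form of Gill's identity.) For every real t > 0, Ŝ_PL(t−) · K̂(t−) = Y(t)/n. -/
open Finset
open scoped Classical

noncomputable section

namespace SurvStmt

/-- The finite set of distinct observed times `{X_1, …, X_n}`. -/
def times {n : ℕ} (X : Fin n → ℝ) : Finset ℝ := Finset.image X Finset.univ

/-- `Y(t) = #{i : X_i ≥ t}`, as a real number. -/
def Yat {n : ℕ} (X : Fin n → ℝ) (t : ℝ) : ℝ :=
  ((Finset.univ.filter (fun i => t ≤ X i)).card : ℝ)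

/-- `Y(t+) = #{i : X_i > t}`, as a real number. -/
def Yplus {n : ℕ} (X : Fin n → ℝ) (t : ℝ) : ℝ :=
  ((Finset.univ.filter (fun i => t < X i)).card : ℝ)

/-- `ΔN(t) = #{i : X_i = t, D_i = 1}`, as a real number. -/
def dN {n : ℕ} (X : Fin n → ℝ) (D : Fin n → Bool) (t : ℝ) : ℝ :=
  ((Finset.univ.filter (fun i => X i = t ∧ D i = true)).card : ℝ)

/-- `ΔC(t) = #{i : X_i = t, D_i = 0}`, as a real number. -/
def dC {n : ℕ} (X : Fin n → ℝ) (D : Fin n → Bool) (t : ℝ) : ℝ :=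
  ((Finset.univ.filter (fun i => X i = t ∧ D i = false)).card : ℝ)

/-- `Y†(t) = Y(t) − ΔN(t)`. -/
def Ydag {n : ℕ} (X : Fin n → ℝ) (D : Fin n → Bool) (t : ℝ) : ℝ :=
  Yat X t - dN X D t

/-- `τ = max_i X_i`, the largest observation time (0 if there is no data). -/
def tau {n : ℕ} (X : Fin n → ℝ) : ℝ := WithBot.unbotD 0 ((times X).max)

/-- Censoring product-limit estimator `K̂(t) = ∏_{u ≤ t} (1 − ΔC(u)/Y†(u))`. -/
def Khat {n : ℕ} (X : Fin n → ℝ) (D : Fin n → Bool) (t : ℝ) : ℝ :=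
  ∏ u ∈ (times X).filter (fun u => u ≤ t), (1 - dC X D u / Ydag X D u)

/-- Left limit `K̂(t−) = ∏_{u < t} (1 − ΔC(u)/Y†(u))`. -/
def Kminus {n : ℕ} (X : Fin n → ℝ) (D : Fin n → Bool) (t : ℝ) : ℝ :=
  ∏ u ∈ (times X).filter (fun u => u < t), (1 - dC X D u / Ydag X D u)

/-- Failure product-limit estimator `Ŝ_PL(t) = ∏_{u ≤ t} (1 − ΔN(u)/Y(u))`. -/
def SPL {n : ℕ} (X : Fin n → ℝ) (D : Fin n → Bool) (t : ℝ) : ℝ :=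
  ∏ u ∈ (times X).filter (fun u => u ≤ t), (1 - dN X D u / Yat X u)

/-- Left limit `Ŝ_PL(t−) = ∏_{u < t} (1 − ΔN(u)/Y(u))`. -/
def SPLminus {n : ℕ} (X : Fin n → ℝ) (D : Fin n → Bool) (t : ℝ) : ℝ :=
  ∏ u ∈ (times X).filter (fun u => u < t), (1 - dN X D u / Yat X u)

/-- IPCW estimator `F̂_IPCW(t) = (1/n) ∑_i D_i 1{X_i ≤ t} / K̂(X_i−)`. -/
def FIPCW {n : ℕ} (X : Fin n → ℝ) (D : Fin n → Bool) (t : ℝ) : ℝ :=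
  (1 / (n : ℝ)) * ∑ i : Fin n,
    (if D i = true then (1 : ℝ) else 0) * (if X i ≤ t then (1 : ℝ) else 0) / Kminus X D (X i)

/-- IPCW survival estimator `S̃_IPCW(t) = (1/n) ∑_i D_i 1{X_i > t} / K̂(X_i−)`. -/
def SIPCW {n : ℕ} (X : Fin n → ℝ) (D : Fin n → Bool) (t : ℝ) : ℝ :=
  (1 / (n : ℝ)) * ∑ i : Fin n,
    (if D i = true then (1 : ℝ) else 0) * (if t < X i then (1 : ℝ) else 0) / Kminus X D (X i)

/-- RTTR jump weight `J(v) = 1/(n · K̂(v−))`. -/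
def Jw {n : ℕ} (X : Fin n → ℝ) (D : Fin n → Bool) (v : ℝ) : ℝ :=
  1 / ((n : ℝ) * Kminus X D v)

/-- Redistribute-to-the-right estimator
`Ŝ_RTTR(t) = 1 − ∑_{v ≤ t} [J(v) ΔN(v) 1{v < τ} + J(τ) Y(τ) 1{v = τ}]`. -/
def SRTTR {n : ℕ} (X : Fin n → ℝ) (D : Fin n → Bool) (t : ℝ) : ℝ :=
  1 - ∑ v ∈ (times X).filter (fun v => v ≤ t),
      (Jw X D v * dN X D v * (if v < tau X then (1 : ℝ) else 0)
        + Jw X D (tau X) * Yat X (tau X) * (if v = tau X then (1 : ℝ) else 0))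

lemma Yat_pos_of_mem {n : ℕ} {X : Fin n → ℝ} {u : ℝ} (hu : u ∈ times X) :
    0 < Yat X u := by
  obtain ⟨i, _, rfl⟩ := Finset.mem_image.mp hu
  have hi : i ∈ Finset.univ.filter (fun j => X i ≤ X j) := by simp
  have := Finset.card_pos.mpr ⟨i, hi⟩
  unfold Yat
  exact_mod_cast this

lemma Yat_split {n : ℕ} (X : Fin n → ℝ) (D : Fin n → Bool) (u : ℝ) :
    Yat X u = Yplus X u + dN X D u + dC X D u := by
  unfold Yat Yplus dN dC
  rw [← Finset.sum_boole, ← Finset.sum_boole, ← Finset.sum_boole, ← Finset.sum_boole,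
    ← Finset.sum_add_distrib, ← Finset.sum_add_distrib]
  apply Finset.sum_congr rfl
  intro i _
  by_cases h1 : u < X i
  · have h2 : X i ≠ u := by intro h; simp [h] at h1
    simp [le_of_lt h1, h1, h2]
  · by_cases h2 : X i = u
    · cases hD : D i <;> simp [h1, h2, hD, le_of_eq h2.symm]
    · have : ¬ u ≤ X i := fun h => h1 (lt_of_le_of_ne h (Ne.symm h2))
      simp [this, h1, h2]

lemma factor_eq {n : ℕ} {X : Fin n → ℝ} (D : Fin n → Bool) {u : ℝ} (hu : u ∈ times X) :
    (1 - dN X D u / Yat X u) * (1 - dC X D u / Ydag X D u) = Yplus X u / Yat X u := by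
  have hY : Yat X u ≠ 0 := ne_of_gt (Yat_pos_of_mem hu)
  have hsplit := Yat_split X D u
  have hdag : Ydag X D u = Yplus X u + dC X D u := by unfold Ydag; linarith
  have hYp : (0:ℝ) ≤ Yplus X u := by unfold Yplus; positivity
  have hdC : (0:ℝ) ≤ dC X D u := by unfold dC; positivity
  by_cases hd : Ydag X D u = 0
  · have hC0 : dC X D u = 0 := by linarith [hdag, hd]
    have hP0 : Yplus X u = 0 := by linarith [hdag, hd]
    have h1 : 1 - dN X D u / Yat X u = Ydag X D u / Yat X u := by
      unfold Ydag; field_simp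
    rw [hC0, h1, hd, hP0]
    simp
  · have h1 : 1 - dN X D u / Yat X u = Ydag X D u / Yat X u := by
      unfold Ydag; field_simp
    have h2 : 1 - dC X D u / Ydag X D u = Yplus X u / Ydag X D u := by
      rw [eq_div_iff hd]; field_simp; linarith
    rw [h1, h2, div_mul_div_comm, mul_comm (Yat X u) (Ydag X D u),
      mul_div_mul_left _ _ hd]

lemma key {n : ℕ} (hn : 0 < n) (X : Fin n → ℝ) :
    ∀ k : ℕ, ∀ t : ℝ, ((times X).filter (fun u => u < t)).card ≤ k →
      ∏ u ∈ (times X).filter (fun u => u < t), Yplus X u / Yat X u = Yat X t / n := by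
  intro k
  induction k with
  | zero =>
    intro t hcard
    have hS : (times X).filter (fun u => u < t) = ∅ := Finset.card_eq_zero.mp (Nat.le_zero.mp hcard)
    have hall : ∀ i, t ≤ X i := by
      intro i
      by_contra h
      have : X i ∈ (times X).filter (fun u => u < t) := by
        simp [times, not_le.mp h]
      rw [hS] at this; simp at this
    have : Finset.univ.filter (fun i => t ≤ X i) = (Finset.univ : Finset (Fin n)) := by
      apply Finset.filter_true_of_mem; intro i _; exact hall i
    rw [hS]
    simp [Yat, this]
    field_simp
  | succ k ih =>
    intro t hcard
    set S := (times X).filter (fun u => u < t) with hSdef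
    by_cases hne : S = ∅
    · have hall : ∀ i, t ≤ X i := by
        intro i
        by_contra h
        have : X i ∈ S := by simp [hSdef, times, not_le.mp h]
        rw [hne] at this; simp at this
      have huniv : Finset.univ.filter (fun i => t ≤ X i) = (Finset.univ : Finset (Fin n)) := by
        apply Finset.filter_true_of_mem; intro i _; exact hall i
      rw [hne]
      simp [Yat, huniv]
      field_simp
    · have hne' : S.Nonempty := Finset.nonempty_iff_ne_empty.mpr hne
      set m := S.max' hne' with hm
      have hmS : m ∈ S := S.max'_mem hne'
      have hmt : m ∈ times X := (Finset.mem_filter.mp hmS).1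
      have hmlt : m < t := by
        have := (Finset.mem_filter.mp hmS).2; simpa using this
      have herase : (times X).filter (fun u => u < m) = S.erase m := by
        ext u
        simp only [Finset.mem_erase, Finset.mem_filter, hSdef]
        constructor
        · rintro ⟨hu, hlt⟩
          exact ⟨ne_of_lt hlt, hu, lt_trans hlt hmlt⟩
        · rintro ⟨hne2, hu, hlt⟩
          refine ⟨hu, lt_of_le_of_ne ?_ hne2⟩
          exact S.le_max' u (Finset.mem_filter.mpr ⟨hu, by simpa using hlt⟩)
      have hcard' : ((times X).filter (fun u => u < m)).card ≤ k := by
        rw [herase, Finset.card_erase_of_mem hmS]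
        omega
      have ihm := ih m hcard'
      have hprod : ∏ u ∈ S, Yplus X u / Yat X u
          = (Yplus X m / Yat X m) * ∏ u ∈ S.erase m, Yplus X u / Yat X u :=
        (Finset.mul_prod_erase S _ hmS).symm
      have hYpm : Yplus X m = Yat X t := by
        unfold Yplus Yat
        congr 1
        congr 1
        ext i
        simp only [Finset.mem_filter, Finset.mem_univ, true_and]
        constructor
        · intro h
          by_contra h2
          have hXi : X i ∈ S := by simp [hSdef, times, not_le.mp h2]
          exact absurd (S.le_max' _ hXi) (not_le.mpr h)
        · intro h; exact lt_of_lt_of_le hmlt h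
      have hYm : Yat X m ≠ 0 := ne_of_gt (Yat_pos_of_mem hmt)
      rw [hprod, ← herase, ihm, hYpm]
      field_simp


/-- left-limit Gill's identity: for every `t > 0`,
`Ŝ_PL(t−) · K̂(t−) = Y(t)/n`. -/
theorem stmt5 (n : ℕ) (hn : 0 < n) (X : Fin n → ℝ) (D : Fin n → Bool)
    (hX : ∀ i, 0 < X i) :
    ∀ t : ℝ, 0 < t →
      SPLminus X D t * Kminus X D t = Yat X t / (n : ℝ) := by
  intro t _
  unfold SPLminus Kminus
  rw [← Finset.prod_mul_distrib]
  rw [Finset.prod_congr rfl (fun u hu => factor_eq D (Finset.mem_filter.mp hu).1)]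
  exact key hn X _ t le_rfl


end SurvStmt
end
end

section
/- Any solution of Efron's self-consistency equation is positive and non-increasing before the last observation time: if Ŝ : ℝ → ℝ satisfies Ŝ(t) = Y(t+)/n + (Ŝ(t)/n) · ∑_{u ≤ t} ΔC(u)/Ŝ(u) for every t with 0 < t < τ, then Ŝ(t) > 0 for every t ∈ (0, τ), and Ŝ(s) ≥ Ŝ(t) whenever 0 < s ≤ t < τ. -/
open Finset
open scoped Classical

noncomputable section

namespace SurvStmt

section Aux

variable {n : ℕ} {X : Fin n → ℝ} {D : Fin n → Bool}

lemma times_nonempty (hn : 0 < n) : (times X).Nonempty :=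
  ⟨X ⟨0, hn⟩, Finset.mem_image_of_mem X (Finset.mem_univ _)⟩

lemma tau_mem (hn : 0 < n) : tau X ∈ times X := by
  have hne := times_nonempty (X := X) hn
  have h : tau X = (times X).max' hne := by
    rw [tau, ← Finset.coe_max' hne, WithBot.unbotD_coe]
  rw [h]; exact Finset.max'_mem _ _

lemma mem_times_pos (hX : ∀ i, 0 < X i) {u : ℝ} (hu : u ∈ times X) : 0 < u := by
  rcases Finset.mem_image.mp hu with ⟨i, _, rfl⟩; exact hX i

lemma Yplus_pos (hn : 0 < n) {t : ℝ} (ht : t < tau X) : 0 < Yplus X t := by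
  rcases Finset.mem_image.mp (tau_mem (X := X) hn) with ⟨i, _, hi⟩
  have hmem : i ∈ Finset.univ.filter (fun i => t < X i) :=
    Finset.mem_filter.mpr ⟨Finset.mem_univ _, by rw [hi]; exact ht⟩
  have : 0 < (Finset.univ.filter (fun i => t < X i)).card :=
    Finset.card_pos.mpr ⟨i, hmem⟩
  unfold Yplus
  exact_mod_cast this

lemma Yplus_anti {a b : ℝ} (h : a ≤ b) : Yplus X b ≤ Yplus X a := by
  have : (Finset.univ.filter (fun i => b < X i)).card ≤
      (Finset.univ.filter (fun i => a < X i)).card := by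
    apply Finset.card_le_card
    intro i hi
    simp only [Finset.mem_filter] at *
    exact ⟨hi.1, lt_of_le_of_lt h hi.2⟩
  unfold Yplus
  exact_mod_cast this

lemma dC_nonneg (u : ℝ) : 0 ≤ dC X D u := Nat.cast_nonneg _

lemma count_le {a b : ℝ} (hab : a < b) : Yplus X b + dC X D b ≤ Yplus X a := by
  classical
  have hdisj : Disjoint (Finset.univ.filter (fun i => b < X i))
      (Finset.univ.filter (fun i => X i = b ∧ D i = false)) := by
    rw [Finset.disjoint_left]
    intro i h1 h2
    simp only [Finset.mem_filter] at h1 h2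
    exact absurd h2.2.1 (ne_of_gt h1.2)
  have hsub : (Finset.univ.filter (fun i => b < X i)) ∪
      (Finset.univ.filter (fun i => X i = b ∧ D i = false)) ⊆
      Finset.univ.filter (fun i => a < X i) := by
    intro i hi
    rcases Finset.mem_union.mp hi with h | h <;> simp only [Finset.mem_filter] at *
    · exact ⟨h.1, lt_trans hab h.2⟩
    · exact ⟨h.1, h.2.1 ▸ hab⟩
  have hc : (Finset.univ.filter (fun i => b < X i)).card +
      (Finset.univ.filter (fun i => X i = b ∧ D i = false)).card ≤
      (Finset.univ.filter (fun i => a < X i)).card := by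
    rw [← Finset.card_union_of_disjoint hdisj]
    exact Finset.card_le_card hsub
  unfold Yplus dC
  exact_mod_cast hc

lemma key_eq (hn : 0 < n) {S : ℝ → ℝ}
    (hS : ∀ t : ℝ, 0 < t → t < tau X →
      S t = Yplus X t / (n : ℝ)
        + (S t / (n : ℝ))
          * ∑ u ∈ (times X).filter (fun u => u ≤ t), dC X D u / S u)
    {t : ℝ} (ht0 : 0 < t) (ht : t < tau X) :
    S t * ((n : ℝ) - ∑ u ∈ (times X).filter (fun u => u ≤ t), dC X D u / S u)
      = Yplus X t := by
  have hn' : (n : ℝ) ≠ 0 := Nat.cast_ne_zero.mpr hn.ne'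
  have h := hS t ht0 ht
  field_simp at h
  linear_combination h

lemma main_pos (hn : 0 < n) (hX : ∀ i, 0 < X i) {S : ℝ → ℝ}
    (hS : ∀ t : ℝ, 0 < t → t < tau X →
      S t = Yplus X t / (n : ℝ)
        + (S t / (n : ℝ))
          * ∑ u ∈ (times X).filter (fun u => u ≤ t), dC X D u / S u) :
    ∀ k : ℕ, ∀ t : ℝ, ((times X).filter (fun u => u ≤ t)).card ≤ k →
      0 < t → t < tau X →
      0 < S t ∧ (∑ u ∈ (times X).filter (fun u => u ≤ t), dC X D u / S u) < (n : ℝ) := by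
  have hn0 : (0 : ℝ) < n := by exact_mod_cast hn
  have hempty : ∀ t : ℝ, (times X).filter (fun u => u ≤ t) = ∅ → 0 < t → t < tau X →
      0 < S t ∧ (∑ u ∈ (times X).filter (fun u => u ≤ t), dC X D u / S u) < (n : ℝ) := by
    intro t hF ht0 ht
    have hk := key_eq hn hS ht0 ht
    rw [hF] at hk ⊢
    simp only [Finset.sum_empty] at hk ⊢
    have hY := Yplus_pos (X := X) hn ht
    constructor
    · nlinarith
    · linarith
  intro k
  induction k with
  | zero =>
    intro t hcard ht0 ht
    exact hempty t (Finset.card_eq_zero.mp (Nat.le_zero.mp hcard)) ht0 ht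
  | succ k ih =>
    intro t hcard ht0 ht
    by_cases hF : (times X).filter (fun u => u ≤ t) = ∅
    · exact hempty t hF ht0 ht
    · have hFne : ((times X).filter (fun u => u ≤ t)).Nonempty :=
        Finset.nonempty_of_ne_empty hF
      set m := ((times X).filter (fun u => u ≤ t)).max' hFne with hm_def
      have hm_memF : m ∈ (times X).filter (fun u => u ≤ t) := Finset.max'_mem _ _
      have hm_times : m ∈ times X := (Finset.mem_filter.mp hm_memF).1
      have hm_le_t : m ≤ t := (Finset.mem_filter.mp hm_memF).2
      have hm0 : 0 < m := mem_times_pos hX hm_times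
      have hmτ : m < tau X := lt_of_le_of_lt hm_le_t ht
      have hset : (times X).filter (fun u => u ≤ t) = (times X).filter (fun u => u ≤ m) := by
        ext u
        simp only [Finset.mem_filter]
        constructor
        · rintro ⟨hu, hut⟩
          have hle : u ≤ m := by
            rw [hm_def]
            apply Finset.le_max'
            exact Finset.mem_filter.mpr ⟨hu, hut⟩
          exact ⟨hu, hle⟩
        · rintro ⟨hu, hum⟩
          exact ⟨hu, le_trans hum hm_le_t⟩
      have hnotmem : m ∉ (times X).filter (fun u => u < m) := by
        simp only [Finset.mem_filter]
        rintro ⟨-, h⟩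
        exact lt_irrefl _ h
      have hsplit : (times X).filter (fun u => u ≤ m)
          = insert m ((times X).filter (fun u => u < m)) := by
        ext u
        simp only [Finset.mem_insert, Finset.mem_filter]
        constructor
        · rintro ⟨hu, hum⟩
          rcases eq_or_lt_of_le hum with h | h
          · exact Or.inl h
          · exact Or.inr ⟨hu, h⟩
        · rintro (rfl | ⟨hu, h⟩)
          · exact ⟨hm_times, le_refl _⟩
          · exact ⟨hu, le_of_lt h⟩
      -- bound the strictly-below sum
      have hsumlt : (∑ u ∈ (times X).filter (fun u => u < m), dC X D u / S u) < (n : ℝ) := by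
        by_cases hF' : (times X).filter (fun u => u < m) = ∅
        · rw [hF']; simpa using hn0
        · have hF'ne : ((times X).filter (fun u => u < m)).Nonempty :=
            Finset.nonempty_of_ne_empty hF'
          set m' := ((times X).filter (fun u => u < m)).max' hF'ne with hm'_def
          have hm'_memF : m' ∈ (times X).filter (fun u => u < m) := Finset.max'_mem _ _
          have hm'_times : m' ∈ times X := (Finset.mem_filter.mp hm'_memF).1
          have hm'_lt : m' < m := (Finset.mem_filter.mp hm'_memF).2
          have hm'0 : 0 < m' := mem_times_pos hX hm'_times
          have hm'τ : m' < tau X := lt_trans hm'_lt hmτ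
          have hset' : (times X).filter (fun u => u ≤ m')
              = (times X).filter (fun u => u < m) := by
            ext u
            simp only [Finset.mem_filter]
            constructor
            · rintro ⟨hu, hum'⟩
              exact ⟨hu, lt_of_le_of_lt hum' hm'_lt⟩
            · rintro ⟨hu, hum⟩
              have hle : u ≤ m' := by
                rw [hm'_def]
                apply Finset.le_max'
                exact Finset.mem_filter.mpr ⟨hu, hum⟩
              exact ⟨hu, hle⟩
          have hsub : (times X).filter (fun u => u < m) ⊆ (times X).filter (fun u => u ≤ t) := by
            intro u hu
            simp only [Finset.mem_filter] at *
            exact ⟨hu.1, le_trans (le_of_lt hu.2) hm_le_t⟩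
          have hss : (times X).filter (fun u => u < m) ⊂ (times X).filter (fun u => u ≤ t) :=
            ⟨hsub, fun h => hnotmem (h hm_memF)⟩
          have hcard' : ((times X).filter (fun u => u < m)).card ≤ k :=
            Nat.lt_succ_iff.mp (lt_of_lt_of_le (Finset.card_lt_card hss) hcard)
          have hcard'' : ((times X).filter (fun u => u ≤ m')).card ≤ k := by
            rw [hset']; exact hcard'
          have := (ih m' hcard'' hm'0 hm'τ).2
          rw [hset'] at this
          exact this
      -- claim at m
      have hkm0 := key_eq hn hS hm0 hmτ
      have hYm := Yplus_pos (X := X) hn hmτ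
      have hSm_ne : S m ≠ 0 := by
        intro h0
        rw [h0, zero_mul] at hkm0
        exact absurd hkm0.symm (ne_of_gt hYm)
      have hsum_m : (∑ u ∈ (times X).filter (fun u => u ≤ m), dC X D u / S u)
          = dC X D m / S m + ∑ u ∈ (times X).filter (fun u => u < m), dC X D u / S u := by
        rw [hsplit, Finset.sum_insert hnotmem]
      have hcancel : S m * (dC X D m / S m) = dC X D m := by
        rw [mul_comm, div_mul_cancel₀ _ hSm_ne]
      have hkm2 : S m * ((n : ℝ) - ∑ u ∈ (times X).filter (fun u => u < m), dC X D u / S u)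
          = Yplus X m + dC X D m := by
        rw [hsum_m] at hkm0
        linear_combination hkm0 + hcancel
      have hden : 0 < (n : ℝ) - ∑ u ∈ (times X).filter (fun u => u < m), dC X D u / S u := by
        linarith
      have hnum : 0 < Yplus X m + dC X D m := by
        have := dC_nonneg (X := X) (D := D) m
        linarith
      have hSm : 0 < S m := by nlinarith [hkm2, hden, hnum]
      have hsumm : (∑ u ∈ (times X).filter (fun u => u ≤ m), dC X D u / S u) < (n : ℝ) := by
        nlinarith [hkm0, hSm, hYm]
      -- conclude at t
      have hkt := key_eq hn hS ht0 ht
      rw [hset] at hkt ⊢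
      have hYt := Yplus_pos (X := X) hn ht
      refine ⟨?_, hsumm⟩
      nlinarith [hkt, hsumm, hYt]

lemma one_step (hn : 0 < n) (hX : ∀ i, 0 < X i) {S : ℝ → ℝ}
    (hS : ∀ t : ℝ, 0 < t → t < tau X →
      S t = Yplus X t / (n : ℝ)
        + (S t / (n : ℝ))
          * ∑ u ∈ (times X).filter (fun u => u ≤ t), dC X D u / S u)
    {a b : ℝ} (ha : 0 < a) (hab : a < b) (hb : b < tau X)
    (hgap : ∀ u ∈ times X, ¬(a < u ∧ u < b)) : S b ≤ S a := by
  have haτ : a < tau X := lt_trans hab hb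
  have hmain := main_pos hn hX hS ((times X).filter (fun u => u ≤ a)).card a le_rfl ha haτ
  obtain ⟨hSa, hsuma⟩ := hmain
  have hka := key_eq hn hS ha haτ
  have hb0 : 0 < b := lt_trans ha hab
  have hkb := key_eq hn hS hb0 hb
  have hden : 0 < (n : ℝ) - ∑ u ∈ (times X).filter (fun u => u ≤ a), dC X D u / S u := by
    linarith
  by_cases hbT : b ∈ times X
  · -- b is an observed time
    obtain ⟨hSb, -⟩ := main_pos hn hX hS ((times X).filter (fun u => u ≤ b)).card b le_rfl hb0 hb
    have hb_not : b ∉ (times X).filter (fun u => u ≤ a) := by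
      simp only [Finset.mem_filter]
      rintro ⟨-, h⟩
      exact absurd hab (not_lt.mpr h)
    have hsplit : (times X).filter (fun u => u ≤ b)
        = insert b ((times X).filter (fun u => u ≤ a)) := by
      ext u
      simp only [Finset.mem_insert, Finset.mem_filter]
      constructor
      · rintro ⟨hu, hub⟩
        rcases eq_or_lt_of_le hub with h | h
        · exact Or.inl h
        · right
          refine ⟨hu, ?_⟩
          by_contra hua
          exact hgap u hu ⟨lt_of_not_ge hua, h⟩
      · rintro (rfl | ⟨hu, h⟩)
        · exact ⟨hbT, le_refl _⟩
        · exact ⟨hu, le_trans h (le_of_lt hab)⟩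
    rw [hsplit, Finset.sum_insert hb_not] at hkb
    have hcancel : S b * (dC X D b / S b) = dC X D b := by
      rw [mul_comm, div_mul_cancel₀ _ (ne_of_gt hSb)]
    have hkb2 : S b * ((n : ℝ) - ∑ u ∈ (times X).filter (fun u => u ≤ a), dC X D u / S u)
        = Yplus X b + dC X D b := by
      linear_combination hkb + hcancel
    have hcount := count_le (X := X) (D := D) hab
    nlinarith [hka, hkb2, hcount, hden]
  · -- b is not an observed time
    have hset : (times X).filter (fun u => u ≤ b) = (times X).filter (fun u => u ≤ a) := by
      ext u
      simp only [Finset.mem_filter]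
      constructor
      · rintro ⟨hu, hub⟩
        refine ⟨hu, ?_⟩
        have hub' : u < b := lt_of_le_of_ne hub (fun h => hbT (h ▸ hu))
        by_contra hua
        exact hgap u hu ⟨lt_of_not_ge hua, hub'⟩
      · rintro ⟨hu, h⟩
        exact ⟨hu, le_trans h (le_of_lt hab)⟩
    rw [hset] at hkb
    have hY := Yplus_anti (X := X) (le_of_lt hab)
    nlinarith [hka, hkb, hY, hden]

lemma chain (hn : 0 < n) (hX : ∀ i, 0 < X i) {S : ℝ → ℝ}
    (hS : ∀ t : ℝ, 0 < t → t < tau X →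
      S t = Yplus X t / (n : ℝ)
        + (S t / (n : ℝ))
          * ∑ u ∈ (times X).filter (fun u => u ≤ t), dC X D u / S u) :
    ∀ k : ℕ, ∀ s t : ℝ, 0 < s → s ≤ t → t < tau X →
      ((times X).filter (fun u => s < u ∧ u ≤ t)).card ≤ k → S t ≤ S s := by
  have hstep_empty : ∀ s t : ℝ, 0 < s → s ≤ t → t < tau X →
      (times X).filter (fun u => s < u ∧ u ≤ t) = ∅ → S t ≤ S s := by
    intro s t hs hst ht hG
    rcases eq_or_lt_of_le hst with rfl | hlt
    · exact le_rfl
    · refine one_step hn hX hS hs hlt ht ?_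
      rintro u hu ⟨h1, h2⟩
      have : u ∈ (times X).filter (fun u => s < u ∧ u ≤ t) :=
        Finset.mem_filter.mpr ⟨hu, h1, le_of_lt h2⟩
      rw [hG] at this
      exact absurd this (Finset.notMem_empty u)
  intro k
  induction k with
  | zero =>
    intro s t hs hst ht hcard
    exact hstep_empty s t hs hst ht (Finset.card_eq_zero.mp (Nat.le_zero.mp hcard))
  | succ k ih =>
    intro s t hs hst ht hcard
    by_cases hG : (times X).filter (fun u => s < u ∧ u ≤ t) = ∅
    · exact hstep_empty s t hs hst ht hG
    · have hGne : ((times X).filter (fun u => s < u ∧ u ≤ t)).Nonempty :=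
        Finset.nonempty_of_ne_empty hG
      set m := ((times X).filter (fun u => s < u ∧ u ≤ t)).max' hGne with hm_def
      have hm_memG : m ∈ (times X).filter (fun u => s < u ∧ u ≤ t) := Finset.max'_mem _ _
      have hm_times : m ∈ times X := (Finset.mem_filter.mp hm_memG).1
      have hsm : s < m := (Finset.mem_filter.mp hm_memG).2.1
      have hm_le_t : m ≤ t := (Finset.mem_filter.mp hm_memG).2.2
      have hm0 : 0 < m := lt_trans hs hsm
      have hmτ : m < tau X := lt_of_le_of_lt hm_le_t ht
      have step1 : S t ≤ S m := by
        rcases eq_or_lt_of_le hm_le_t with heq | hmt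
        · exact le_of_eq (by rw [heq])
        · refine one_step hn hX hS hm0 hmt ht ?_
          rintro u hu ⟨h1, h2⟩
          have hmem : u ∈ (times X).filter (fun u => s < u ∧ u ≤ t) :=
            Finset.mem_filter.mpr ⟨hu, lt_trans hsm h1, le_of_lt h2⟩
          have hle : u ≤ m := by
            rw [hm_def]
            apply Finset.le_max'
            exact hmem
          exact absurd hle (not_le.mpr h1)
      by_cases hG' : (times X).filter (fun u => s < u ∧ u < m) = ∅
      · have step2 : S m ≤ S s := by
          refine one_step hn hX hS hs hsm hmτ ?_
          rintro u hu ⟨h1, h2⟩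
          have : u ∈ (times X).filter (fun u => s < u ∧ u < m) :=
            Finset.mem_filter.mpr ⟨hu, h1, h2⟩
          rw [hG'] at this
          exact absurd this (Finset.notMem_empty u)
        exact le_trans step1 step2
      · have hG'ne : ((times X).filter (fun u => s < u ∧ u < m)).Nonempty :=
          Finset.nonempty_of_ne_empty hG'
        set m₂ := ((times X).filter (fun u => s < u ∧ u < m)).max' hG'ne with hm₂_def
        have hm₂_memG : m₂ ∈ (times X).filter (fun u => s < u ∧ u < m) := Finset.max'_mem _ _
        have hm₂_times : m₂ ∈ times X := (Finset.mem_filter.mp hm₂_memG).1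
        have hsm₂ : s < m₂ := (Finset.mem_filter.mp hm₂_memG).2.1
        have hm₂m : m₂ < m := (Finset.mem_filter.mp hm₂_memG).2.2
        have hm₂0 : 0 < m₂ := lt_trans hs hsm₂
        have hm₂τ : m₂ < tau X := lt_trans hm₂m hmτ
        have step2 : S m ≤ S m₂ := by
          refine one_step hn hX hS hm₂0 hm₂m hmτ ?_
          rintro u hu ⟨h1, h2⟩
          have hmem : u ∈ (times X).filter (fun u => s < u ∧ u < m) :=
            Finset.mem_filter.mpr ⟨hu, lt_trans hsm₂ h1, h2⟩
          have hle : u ≤ m₂ := by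
            rw [hm₂_def]
            apply Finset.le_max'
            exact hmem
          exact absurd hle (not_le.mpr h1)
        have step3 : S m₂ ≤ S s := by
          refine ih s m₂ hs (le_of_lt hsm₂) hm₂τ ?_
          have hsub : (times X).filter (fun u => s < u ∧ u ≤ m₂) ⊆
              ((times X).filter (fun u => s < u ∧ u ≤ t)).erase m := by
            intro u hu
            simp only [Finset.mem_filter] at hu
            refine Finset.mem_erase.mpr ⟨?_, Finset.mem_filter.mpr
              ⟨hu.1, hu.2.1, le_trans hu.2.2 (le_trans (le_of_lt hm₂m) hm_le_t)⟩⟩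
            intro h
            rw [h] at hu
            exact absurd hu.2.2 (not_le.mpr hm₂m)
          have h1 : ((times X).filter (fun u => s < u ∧ u ≤ m₂)).card ≤
              (((times X).filter (fun u => s < u ∧ u ≤ t)).erase m).card :=
            Finset.card_le_card hsub
          have h2 : (((times X).filter (fun u => s < u ∧ u ≤ t)).erase m).card
              = ((times X).filter (fun u => s < u ∧ u ≤ t)).card - 1 :=
            Finset.card_erase_of_mem hm_memG
          have h3 : 0 < ((times X).filter (fun u => s < u ∧ u ≤ t)).card :=
            Finset.card_pos.mpr hGne
          omega
        exact le_trans (le_trans step1 step2) step3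

end Aux

/-- any solution of Efron's self-consistency equation is positive and
non-increasing on `(0, τ)`. -/
theorem stmt7 (n : ℕ) (hn : 0 < n) (X : Fin n → ℝ) (D : Fin n → Bool)
    (hX : ∀ i, 0 < X i) (S : ℝ → ℝ)
    (hS : ∀ t : ℝ, 0 < t → t < tau X →
      S t = Yplus X t / (n : ℝ)
        + (S t / (n : ℝ))
          * ∑ u ∈ (times X).filter (fun u => u ≤ t), dC X D u / S u) :
    (∀ t : ℝ, 0 < t → t < tau X → 0 < S t)
    ∧ (∀ s t : ℝ, 0 < s → s ≤ t → t < tau X → S t ≤ S s) := by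
  constructor
  · intro t ht0 ht
    exact (main_pos hn hX hS ((times X).filter (fun u => u ≤ t)).card t le_rfl ht0 ht).1
  · intro s t hs hst ht
    exact chain hn hX hS ((times X).filter (fun u => s < u ∧ u ≤ t)).card s t hs hst ht le_rfl

end SurvStmt
end
end

section
/- (Product-limit = IPCW for the distribution function.) For every real t ≥ 0, 1 − Ŝ_PL(t) = F̂_IPCW(t); that is, 1 − ∏_{u ≤ t} (1 − ΔN(u)/Y(u)) = (1/n) ∑_{i=1}^n D_i · 1{X_i ≤ t} / K̂(X_i−). -/
open Finset
open scoped Classical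

noncomputable section

namespace SurvStmt

section Aux

variable {n : ℕ} (X : Fin n → ℝ) (D : Fin n → Bool)

lemma mem_times_iff {u : ℝ} : u ∈ times X ↔ ∃ i, X i = u := by
  simp [times]

lemma Yat_pos {u : ℝ} (hu : u ∈ times X) : 0 < Yat X u := by
  rw [mem_times_iff] at hu
  obtain ⟨i, hi⟩ := hu
  have hmem : i ∈ Finset.univ.filter (fun i => u ≤ X i) := by simp [hi.ge]
  unfold Yat
  exact_mod_cast Finset.card_pos.mpr ⟨i, hmem⟩

lemma count_split (u : ℝ) : Yat X u = Yplus X u + dN X D u + dC X D u := by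
  unfold Yat Yplus dN dC
  rw [← Finset.sum_boole, ← Finset.sum_boole, ← Finset.sum_boole, ← Finset.sum_boole,
    ← Finset.sum_add_distrib, ← Finset.sum_add_distrib]
  refine Finset.sum_congr rfl fun i _ => ?_
  rcases lt_trichotomy u (X i) with h | h | h
  · rw [if_pos h.le, if_pos h, if_neg (by simp [h.ne']), if_neg (by simp [h.ne'])]; ring
  · subst h
    cases hD : D i <;> simp [hD]
  · rw [if_neg (not_le.mpr h), if_neg (not_lt.mpr h.le), if_neg (by simp [h.ne]),
      if_neg (by simp [h.ne])]
    ring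

lemma step_eq (m : ℝ) (hm : m ∈ times X) :
    (1 - dN X D m / Yat X m) * (1 - dC X D m / Ydag X D m) * (Yat X m / n)
      = Yplus X m / n := by
  have hY := Yat_pos X hm
  have hsplit := count_split X D m
  have hplus : (0:ℝ) ≤ Yplus X m := Nat.cast_nonneg _
  have hc : (0:ℝ) ≤ dC X D m := Nat.cast_nonneg _
  by_cases hd : Ydag X D m = 0
  · have hdN : dN X D m = Yat X m := by unfold Ydag at hd; linarith
    have hc0 : dC X D m = 0 := by unfold Ydag at hd; linarith
    have hp0 : Yplus X m = 0 := by unfold Ydag at hd; linarith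
    rw [hdN, div_self hY.ne', hp0]
    ring
  · have h1 : 1 - dN X D m / Yat X m = Ydag X D m / Yat X m := by
      unfold Ydag; field_simp
    have h2 : 1 - dC X D m / Ydag X D m = Yplus X m / Ydag X D m := by
      rw [eq_div_iff hd]
      unfold Ydag at *
      field_simp
      linarith
    rw [h1, h2]
    have e1 : Ydag X D m / Yat X m * (Yplus X m / Ydag X D m) * (Yat X m / (n:ℝ))
        = Yplus X m / (n:ℝ) * (Ydag X D m / Ydag X D m) * (Yat X m / Yat X m) := by
      ring
    rw [e1, div_self hd, div_self hY.ne', mul_one, mul_one]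

lemma left_reduce (v : ℝ) :
    ((times X).filter (fun u => u < v) = ∅ ∧ Yat X v = n) ∨
    ∃ t', t' < v ∧
      (times X).filter (fun u => u ≤ t') = (times X).filter (fun u => u < v) ∧
      Yplus X t' = Yat X v := by
  by_cases he : (times X).filter (fun u => u < v) = ∅
  · left
    refine ⟨he, ?_⟩
    have huniv : Finset.univ.filter (fun i => v ≤ X i) = Finset.univ := by
      ext i
      simp only [Finset.mem_filter, Finset.mem_univ, true_and, iff_true]
      by_contra h
      have hmem : X i ∈ (times X).filter (fun u => u < v) := by
        refine Finset.mem_filter.mpr ⟨(mem_times_iff X).mpr ⟨i, rfl⟩, not_le.mp h⟩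
      rw [he] at hmem
      exact absurd hmem (Finset.notMem_empty _)
    unfold Yat
    rw [huniv]
    simp
  · right
    have hs : ((times X).filter (fun u => u < v)).Nonempty :=
      Finset.nonempty_of_ne_empty he
    set t' := ((times X).filter (fun u => u < v)).max' hs with ht'
    have ht'mem := ((times X).filter (fun u => u < v)).max'_mem hs
    have ht'v : t' < v := (Finset.mem_filter.mp ht'mem).2
    refine ⟨t', ht'v, ?_, ?_⟩
    · ext u
      simp only [Finset.mem_filter, and_congr_right_iff]
      intro hu
      constructor
      · intro h; linarith
      · intro h
        exact Finset.le_max' ((times X).filter (fun w => w < v)) u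
          (Finset.mem_filter.mpr ⟨hu, h⟩)
    · unfold Yplus Yat
      congr 2
      ext i
      simp only [Finset.mem_filter, Finset.mem_univ, true_and]
      constructor
      · intro h
        by_contra hlt
        have hmem : X i ∈ (times X).filter (fun u => u < v) :=
          Finset.mem_filter.mpr ⟨(mem_times_iff X).mpr ⟨i, rfl⟩, not_le.mp hlt⟩
        have := Finset.le_max' _ (X i) hmem
        rw [← ht'] at this
        linarith
      · intro h; linarith

lemma prodKS (hn : 0 < n) : ∀ t : ℝ, SPL X D t * Khat X D t = Yplus X t / n := by
  have hn' : (n : ℝ) ≠ 0 := Nat.cast_ne_zero.mpr hn.ne'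
  intro t
  generalize hk : ((times X).filter (fun u => u ≤ t)).card = k
  induction k using Nat.strong_induction_on generalizing t with
  | _ k IH =>
    by_cases he : (times X).filter (fun u => u ≤ t) = ∅
    · unfold SPL Khat
      rw [he, Finset.prod_empty, Finset.prod_empty]
      have huniv : Finset.univ.filter (fun i => t < X i) = Finset.univ := by
        ext i
        simp only [Finset.mem_filter, Finset.mem_univ, true_and, iff_true]
        by_contra h
        have hmem : X i ∈ (times X).filter (fun u => u ≤ t) :=
          Finset.mem_filter.mpr ⟨(mem_times_iff X).mpr ⟨i, rfl⟩, not_lt.mp h⟩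
        rw [he] at hmem
        exact absurd hmem (Finset.notMem_empty _)
      unfold Yplus
      rw [huniv]
      simp [div_self hn']
    · have hs : ((times X).filter (fun u => u ≤ t)).Nonempty :=
        Finset.nonempty_of_ne_empty he
      set m := ((times X).filter (fun u => u ≤ t)).max' hs with hmdef
      have hmmem := ((times X).filter (fun u => u ≤ t)).max'_mem hs
      have hmT : m ∈ times X := (Finset.mem_filter.mp hmmem).1
      have hmt : m ≤ t := (Finset.mem_filter.mp hmmem).2
      have hmnot : m ∉ (times X).filter (fun u => u < m) := by simp
      have hins : (times X).filter (fun u => u ≤ t)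
          = insert m ((times X).filter (fun u => u < m)) := by
        ext u
        simp only [Finset.mem_insert, Finset.mem_filter]
        constructor
        · rintro ⟨hu, hut⟩
          have hle : u ≤ m := Finset.le_max' ((times X).filter (fun w => w ≤ t)) u
            (Finset.mem_filter.mpr ⟨hu, hut⟩)
          rcases eq_or_lt_of_le hle with h | h
          · exact Or.inl h
          · exact Or.inr ⟨hu, h⟩
        · rintro (rfl | ⟨hu, hum⟩)
          · exact ⟨hmT, hmt⟩
          · exact ⟨hu, le_trans hum.le hmt⟩
      have hSPL : SPL X D t = (1 - dN X D m / Yat X m) * SPLminus X D m := by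
        rw [SPL, hins, Finset.prod_insert hmnot]; rfl
      have hK : Khat X D t = (1 - dC X D m / Ydag X D m) * Kminus X D m := by
        rw [Khat, hins, Finset.prod_insert hmnot]; rfl
      have hYpt : Yplus X t = Yplus X m := by
        unfold Yplus
        congr 2
        ext i
        simp only [Finset.mem_filter, Finset.mem_univ, true_and]
        constructor
        · intro h; linarith
        · intro h
          by_contra hle
          have hmem : X i ∈ (times X).filter (fun u => u ≤ t) :=
            Finset.mem_filter.mpr ⟨(mem_times_iff X).mpr ⟨i, rfl⟩, not_lt.mp hle⟩
          have := Finset.le_max' _ (X i) hmem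
          rw [← hmdef] at this
          linarith
      have hcard : ((times X).filter (fun u => u < m)).card + 1 = k := by
        rw [← hk, hins, Finset.card_insert_of_notMem hmnot]
      have hSK : SPLminus X D m * Kminus X D m = Yat X m / n := by
        rcases left_reduce X m with ⟨hemp, hYn⟩ | ⟨t', ht'v, hfil, hYp⟩
        · unfold SPLminus Kminus
          rw [hemp, Finset.prod_empty, Finset.prod_empty, hYn]
          simp [div_self hn']
        · have h1 : SPLminus X D m = SPL X D t' := by unfold SPLminus SPL; rw [hfil]
          have h2 : Kminus X D m = Khat X D t' := by unfold Kminus Khat; rw [hfil]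
          have hlt : ((times X).filter (fun u => u ≤ t')).card < k := by
            rw [hfil]; omega
          rw [h1, h2, IH _ hlt t' rfl, hYp]
      rw [hSPL, hK, hYpt]
      calc (1 - dN X D m / Yat X m) * SPLminus X D m
            * ((1 - dC X D m / Ydag X D m) * Kminus X D m)
          = (1 - dN X D m / Yat X m) * (1 - dC X D m / Ydag X D m)
            * (SPLminus X D m * Kminus X D m) := by ring
        _ = (1 - dN X D m / Yat X m) * (1 - dC X D m / Ydag X D m) * (Yat X m / n) := by
            rw [hSK]
        _ = Yplus X m / n := step_eq X D m hmT

lemma prodKS_minus (hn : 0 < n) (v : ℝ) :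
    SPLminus X D v * Kminus X D v = Yat X v / n := by
  have hn' : (n : ℝ) ≠ 0 := Nat.cast_ne_zero.mpr hn.ne'
  rcases left_reduce X v with ⟨hemp, hYn⟩ | ⟨t', _, hfil, hYp⟩
  · unfold SPLminus Kminus
    rw [hemp, Finset.prod_empty, Finset.prod_empty, hYn]
    simp [div_self hn']
  · have h1 : SPLminus X D v = SPL X D t' := by unfold SPLminus SPL; rw [hfil]
    have h2 : Kminus X D v = Khat X D t' := by unfold Kminus Khat; rw [hfil]
    rw [h1, h2, prodKS X D hn t', hYp]

lemma sum_telescope (t : ℝ) :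
    ∑ u ∈ (times X).filter (fun u => u ≤ t), SPLminus X D u * (dN X D u / Yat X u)
      = 1 - SPL X D t := by
  generalize hk : ((times X).filter (fun u => u ≤ t)).card = k
  induction k using Nat.strong_induction_on generalizing t with
  | _ k IH =>
    by_cases he : (times X).filter (fun u => u ≤ t) = ∅
    · rw [he, Finset.sum_empty]
      unfold SPL
      rw [he, Finset.prod_empty]
      ring
    · have hs : ((times X).filter (fun u => u ≤ t)).Nonempty :=
        Finset.nonempty_of_ne_empty he
      set m := ((times X).filter (fun u => u ≤ t)).max' hs with hmdef
      have hmmem := ((times X).filter (fun u => u ≤ t)).max'_mem hs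
      have hmT : m ∈ times X := (Finset.mem_filter.mp hmmem).1
      have hmt : m ≤ t := (Finset.mem_filter.mp hmmem).2
      have hmnot : m ∉ (times X).filter (fun u => u < m) := by simp
      have hins : (times X).filter (fun u => u ≤ t)
          = insert m ((times X).filter (fun u => u < m)) := by
        ext u
        simp only [Finset.mem_insert, Finset.mem_filter]
        constructor
        · rintro ⟨hu, hut⟩
          have hle : u ≤ m := Finset.le_max' ((times X).filter (fun w => w ≤ t)) u
            (Finset.mem_filter.mpr ⟨hu, hut⟩)
          rcases eq_or_lt_of_le hle with h | h
          · exact Or.inl h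
          · exact Or.inr ⟨hu, h⟩
        · rintro (rfl | ⟨hu, hum⟩)
          · exact ⟨hmT, hmt⟩
          · exact ⟨hu, le_trans hum.le hmt⟩
      have hSPL : SPL X D t = (1 - dN X D m / Yat X m) * SPLminus X D m := by
        rw [SPL, hins, Finset.prod_insert hmnot]; rfl
      have hsum : ∑ u ∈ (times X).filter (fun u => u < m),
          SPLminus X D u * (dN X D u / Yat X u) = 1 - SPLminus X D m := by
        rcases left_reduce X m with ⟨hemp, _⟩ | ⟨t', ht'v, hfil, _⟩
        · rw [hemp, Finset.sum_empty]
          unfold SPLminus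
          rw [hemp, Finset.prod_empty]
          ring
        · have hlt : ((times X).filter (fun u => u ≤ t')).card < k := by
            rw [hfil, ← hk, hins, Finset.card_insert_of_notMem hmnot]
            omega
          have h1 : SPLminus X D m = SPL X D t' := by unfold SPLminus SPL; rw [hfil]
          rw [← hfil, IH _ hlt t' rfl, h1]
      rw [hins, Finset.sum_insert hmnot, hsum, hSPL]
      ring

end Aux

/-- product-limit = IPCW for the distribution function: for every
`t ≥ 0`, `1 − Ŝ_PL(t) = F̂_IPCW(t)`. -/
theorem stmt10 (n : ℕ) (hn : 0 < n) (X : Fin n → ℝ) (D : Fin n → Bool)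
    (hX : ∀ i, 0 < X i) :
    ∀ t : ℝ, 0 ≤ t → 1 - SPL X D t = FIPCW X D t := by
  intro t _
  have hn' : (n : ℝ) ≠ 0 := Nat.cast_ne_zero.mpr hn.ne'
  rw [← sum_telescope X D t]
  unfold FIPCW
  have hmaps : ∀ i ∈ (Finset.univ : Finset (Fin n)), X i ∈ times X := fun i _ =>
    (mem_times_iff X).mpr ⟨i, rfl⟩
  rw [← Finset.sum_fiberwise_of_maps_to hmaps]
  have hinner : ∀ u ∈ times X,
      ∑ i ∈ Finset.univ.filter (fun i => X i = u),
        (if D i = true then (1:ℝ) else 0) * (if X i ≤ t then (1:ℝ) else 0) / Kminus X D (X i)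
      = (if u ≤ t then dN X D u / Kminus X D u else 0) := by
    intro u hu
    have hcong : ∀ i ∈ Finset.univ.filter (fun i => X i = u),
        (if D i = true then (1:ℝ) else 0) * (if X i ≤ t then (1:ℝ) else 0) / Kminus X D (X i)
        = (if D i = true then (1:ℝ) else 0) * ((if u ≤ t then (1:ℝ) else 0) / Kminus X D u) := by
      intro i hi
      have hXi : X i = u := (Finset.mem_filter.mp hi).2
      rw [hXi]; ring
    rw [Finset.sum_congr rfl hcong, ← Finset.sum_mul, Finset.sum_boole, Finset.filter_filter]
    have hdN : ((Finset.univ.filter (fun i => X i = u ∧ D i = true)).card : ℝ) = dN X D u := rfl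
    rw [hdN]
    split_ifs <;> simp [mul_one_div, div_eq_mul_inv]
  rw [Finset.sum_congr rfl hinner, ← Finset.sum_filter, Finset.mul_sum]
  refine Finset.sum_congr rfl fun u hu => ?_
  have huT : u ∈ times X := (Finset.mem_filter.mp hu).1
  have hY := Yat_pos X huT
  have hSK := prodKS_minus X D hn u
  have hK : Kminus X D u ≠ 0 := by
    intro h0
    rw [h0, mul_zero] at hSK
    have hpos : (0:ℝ) < Yat X u / n := by positivity
    linarith [hSK]
  have hSK' : SPLminus X D u * Kminus X D u * (n:ℝ) = Yat X u := by
    rw [eq_div_iff hn'] at hSK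
    exact hSK
  field_simp [hn', hK, hY.ne']
  linear_combination dN X D u * hSK' 

end SurvStmt
end
end
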